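/- For W distributed as beta(1,θ), i.e. with density θ(1-x)^(θ-1) on (0,1), the decrement matrix is q(n:m) = C(n,m) (θ)_(n-m) m! / ((θ+1)_(n-1) n), and the product formula p°(λ_1,...,λ_k) = ∏_{j=1}^k q(Λ_j : λ_j) with Λ_j = λ_j + ... + λ_k simplifies to p°(λ_1,...,λ_k) = θ^k n! / ((θ)_n ∏_{j=1}^k Λ_j), where n = λ_1+...+λ_k. -/

import Mathlib

open MeasureTheory

/-- Rising factorial `(z)_k = z (z+1) ⋯ (z+k-1)`. -/
noncomputable def rpoch (z : ℝ) (k : ℕ) : ℝ := ∏ i ∈ Finset.range k, (z + i)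

section helpers
open intervalIntegral Finset

lemma rpoch_pos {z : ℝ} (hz : 0 < z) (k : ℕ) : 0 < rpoch z k := by
  apply Finset.prod_pos; intro i _; positivity

lemma rpoch_add (z : ℝ) (a b : ℕ) : rpoch z (a + b) = rpoch z a * rpoch (z + a) b := by
  unfold rpoch
  rw [Finset.prod_range_add]
  congr 1
  exact Finset.prod_congr rfl (by intro i _; push_cast; ring)

lemma rpoch_succ_left (z : ℝ) (k : ℕ) : rpoch z (k + 1) = z * rpoch (z + 1) k := by
  rw [add_comm k 1, rpoch_add]; simp [rpoch]

lemma rpoch_succ_right (z : ℝ) (k : ℕ) : rpoch z (k + 1) = rpoch z k * (z + k) :=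
  Finset.prod_range_succ _ _

-- integrability
lemma J0_int {s : ℝ} (hs : -1 < s) :
    IntervalIntegrable (fun x : ℝ => (1 - x) ^ s) volume 0 1 := by
  have h := (intervalIntegrable_rpow' (a := 0) (b := 1) hs).comp_sub_left 1
  norm_num at h
  exact h.symm

lemma J_int (p : ℕ) {s : ℝ} (hs : -1 < s) :
    IntervalIntegrable (fun x : ℝ => x ^ p * (1 - x) ^ s) volume 0 1 :=
  (J0_int hs).continuousOn_mul (Continuous.continuousOn (by continuity))

lemma contF {c : ℝ} (hc : 0 ≤ c) : ContinuousOn (fun x : ℝ => (1 - x) ^ c) (Set.Icc 0 1) :=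
  ContinuousOn.rpow_const (by fun_prop) (fun x _ => Or.inr hc)

lemma derivF {c : ℝ} {x : ℝ} (hx : x ∈ Set.Ioo (0:ℝ) 1) :
    HasDerivAt (fun y : ℝ => (1 - y) ^ c) (-(c * (1 - x) ^ (c - 1))) x := by
  have h1 : (1 : ℝ) - x ≠ 0 := by simp only [Set.mem_Ioo] at hx; intro h; linarith [hx.2]
  have := (Real.hasDerivAt_rpow_const (p := c) (Or.inl h1)).comp x
    ((hasDerivAt_id x).const_sub 1)
  simpa [Function.comp_def] using this

lemma J_val (p : ℕ) : ∀ {s : ℝ}, -1 < s →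
    ∫ x in (0:ℝ)..1, x ^ p * (1 - x) ^ s = p.factorial / rpoch (s + 1) (p + 1) := by
  induction p with
  | zero =>
    intro s hs
    have hs1 : (0:ℝ) < s + 1 := by linarith
    have key : ∫ x in (0:ℝ)..1, x ^ 0 * (1 - x) ^ s
        = (fun x : ℝ => -(1 - x) ^ (s + 1) / (s + 1)) 1
          - (fun x : ℝ => -(1 - x) ^ (s + 1) / (s + 1)) 0 := by
      apply integral_eq_sub_of_hasDerivAt_of_le
        (f := fun x : ℝ => -(1 - x) ^ (s + 1) / (s + 1)) zero_le_one
      · exact ((contF hs1.le).neg.div_const _)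
      · intro x hx
        have := ((derivF (c := s + 1) hx).neg).div_const (s + 1)
        refine this.congr_deriv ?_
        have h1 : (0:ℝ) < 1 - x := by simp only [Set.mem_Ioo] at hx; linarith [hx.2]
        field_simp
        norm_num
      · simpa using J_int 0 hs
    rw [key]
    simp [rpoch, Real.zero_rpow (by positivity : s + 1 ≠ 0)]
    ring
  | succ p ih =>
    intro s hs
    have hs1 : (0:ℝ) < s + 1 := by linarith
    have hs' : (-1:ℝ) < s + 1 := by linarith
    have key : ∫ x in (0:ℝ)..1,
        ((p + 1 : ℝ) * (x ^ p * (1 - x) ^ (s + 1)) - (s + 1) * (x ^ (p + 1) * (1 - x) ^ s))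
        = (fun x : ℝ => x ^ (p + 1) * (1 - x) ^ (s + 1)) 1
          - (fun x : ℝ => x ^ (p + 1) * (1 - x) ^ (s + 1)) 0 := by
      apply integral_eq_sub_of_hasDerivAt_of_le
        (f := fun x : ℝ => x ^ (p + 1) * (1 - x) ^ (s + 1)) zero_le_one
      · exact (continuousOn_pow _).mul (contF hs1.le)
      · intro x hx
        have h1 : (0:ℝ) < 1 - x := by simp only [Set.mem_Ioo] at hx; linarith [hx.2]
        have := (hasDerivAt_pow (p + 1) x).mul (derivF (c := s + 1) hx)
        refine this.congr_deriv ?_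
        have hrw : (1 - x) ^ (s + 1) = (1 - x) ^ s * (1 - x) := by
          rw [← Real.rpow_add_one h1.ne' s]
        have hrw2 : (1 - x) ^ (s + 1 - 1) = (1 - x) ^ s := by norm_num
        rw [hrw2, hrw]
        push_cast
        ring
      · exact ((J_int p hs').const_mul _).sub ((J_int (p + 1) hs).const_mul _)
    rw [integral_sub ((J_int p hs').const_mul _) ((J_int (p + 1) hs).const_mul _),
      intervalIntegral.integral_const_mul, intervalIntegral.integral_const_mul, ih hs'] at key
    have h0 : (fun x : ℝ => x ^ (p + 1) * (1 - x) ^ (s + 1)) 1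
          - (fun x : ℝ => x ^ (p + 1) * (1 - x) ^ (s + 1)) 0 = 0 := by
      simp [Real.zero_rpow (by positivity : s + 1 ≠ 0)]
    rw [h0] at key
    have hr : rpoch (s + 1) (p + 1 + 1) = (s + 1) * rpoch (s + 1 + 1) (p + 1) := by
      rw [rpoch_succ_left]
    have hrp : 0 < rpoch (s + 1 + 1) (p + 1) := rpoch_pos (by linarith) _
    rw [hr]
    push_cast [Nat.factorial_succ]
    field_simp at key ⊢
    nlinarith [key, hrp, hs1]

lemma J0_val {s : ℝ} (hs : -1 < s) : ∫ x in (0:ℝ)..1, (1 - x) ^ s = 1 / (s + 1) := by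
  have := J_val 0 hs
  simp [rpoch] at this ⊢
  convert this using 2

lemma part1 (θ : ℝ) (hθ : 0 < θ) (n m : ℕ) (hm : 1 ≤ m) (hmn : m ≤ n) :
    (n.choose m : ℝ) *
        (∫ x in Set.Ioo (0:ℝ) 1, x ^ m * (1 - x) ^ (n - m) * (θ * (1 - x) ^ (θ - 1))) /
      (∫ x in Set.Ioo (0:ℝ) 1, (1 - (1 - x) ^ n) * (θ * (1 - x) ^ (θ - 1))) =
    (n.choose m : ℝ) * rpoch θ (n - m) * (m.factorial : ℝ) /
      (rpoch (θ + 1) (n - 1) * n) := by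
  have hn : 1 ≤ n := hm.trans hmn
  have hc : (-1:ℝ) < ((n - m : ℕ) : ℝ) + θ - 1 := by
    have : (0:ℝ) ≤ ((n - m : ℕ) : ℝ) := Nat.cast_nonneg _
    linarith
  have hd : (-1:ℝ) < (n : ℝ) + θ - 1 := by
    have : (0:ℝ) ≤ (n : ℝ) := Nat.cast_nonneg _
    linarith
  have hθ1 : (-1:ℝ) < θ - 1 := by linarith
  have hnum : (∫ x in Set.Ioo (0:ℝ) 1, x ^ m * (1 - x) ^ (n - m) * (θ * (1 - x) ^ (θ - 1)))
      = θ * ((m.factorial : ℝ) / rpoch (θ + ((n - m : ℕ) : ℝ)) (m + 1)) := by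
    rw [setIntegral_congr_fun (g := fun x : ℝ =>
        θ * (x ^ m * (1 - x) ^ (((n - m : ℕ) : ℝ) + θ - 1))) measurableSet_Ioo ?_]
    · rw [← integral_Ioc_eq_integral_Ioo, ← integral_of_le zero_le_one,
        intervalIntegral.integral_const_mul, J_val m hc,
        show ((n - m : ℕ) : ℝ) + θ - 1 + 1 = θ + ((n - m : ℕ) : ℝ) by ring]
    · intro x hx
      have h1 : (0:ℝ) < 1 - x := by simp only [Set.mem_Ioo] at hx; linarith [hx.2]
      have h2 : ((1:ℝ) - x) ^ (n - m) * (1 - x) ^ (θ - 1)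
          = (1 - x) ^ (((n - m : ℕ) : ℝ) + θ - 1) := by
        rw [← Real.rpow_natCast (1 - x) (n - m), ← Real.rpow_add h1]
        congr 1; ring
      calc x ^ m * (1 - x) ^ (n - m) * (θ * (1 - x) ^ (θ - 1))
          = θ * (x ^ m * ((1 - x) ^ (n - m) * (1 - x) ^ (θ - 1))) := by ring
        _ = θ * (x ^ m * (1 - x) ^ (((n - m : ℕ) : ℝ) + θ - 1)) := by rw [h2]
  have hden : (∫ x in Set.Ioo (0:ℝ) 1, (1 - (1 - x) ^ n) * (θ * (1 - x) ^ (θ - 1)))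
      = (n : ℝ) / ((n : ℝ) + θ) := by
    rw [setIntegral_congr_fun (g := fun x : ℝ =>
        θ * (1 - x) ^ (θ - 1) - θ * (1 - x) ^ ((n : ℝ) + θ - 1)) measurableSet_Ioo ?_]
    · rw [← integral_Ioc_eq_integral_Ioo, ← integral_of_le zero_le_one,
        integral_sub ((J0_int hθ1).const_mul θ) ((J0_int hd).const_mul θ),
        intervalIntegral.integral_const_mul, intervalIntegral.integral_const_mul, J0_val hθ1, J0_val hd]
      have h3 : (0:ℝ) < (n : ℝ) + θ := by
        have : (0:ℝ) ≤ (n : ℝ) := Nat.cast_nonneg _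
        linarith
      rw [show θ - 1 + 1 = θ by ring, show (n:ℝ) + θ - 1 + 1 = n + θ by ring]
      field_simp
      ring
    · intro x hx
      have h1 : (0:ℝ) < 1 - x := by simp only [Set.mem_Ioo] at hx; linarith [hx.2]
      have h2 : ((1:ℝ) - x) ^ n * (1 - x) ^ (θ - 1) = (1 - x) ^ ((n : ℝ) + θ - 1) := by
        rw [← Real.rpow_natCast (1 - x) n, ← Real.rpow_add h1]
        congr 1; ring
      calc (1 - (1 - x) ^ n) * (θ * (1 - x) ^ (θ - 1))
          = θ * (1 - x) ^ (θ - 1) - θ * ((1 - x) ^ n * (1 - x) ^ (θ - 1)) := by ring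
        _ = θ * (1 - x) ^ (θ - 1) - θ * (1 - x) ^ ((n : ℝ) + θ - 1) := by rw [h2]
  rw [hnum, hden]
  have hkey : rpoch θ (n - m) * rpoch (θ + ((n - m : ℕ) : ℝ)) (m + 1)
      = θ * (rpoch (θ + 1) (n - 1) * (θ + n)) := by
    have h1 := rpoch_add θ (n - m) (m + 1)
    rw [show n - m + (m + 1) = n + 1 by omega] at h1
    have h2 : rpoch θ (n + 1) = θ * rpoch (θ + 1) n := rpoch_succ_left θ n
    have h3 : rpoch (θ + 1) n = rpoch (θ + 1) (n - 1) * (θ + 1 + ((n - 1 : ℕ) : ℝ)) := by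
      conv_lhs => rw [show n = (n - 1) + 1 by omega]
      exact rpoch_succ_right _ _
    have h4 : ((n - 1 : ℕ) : ℝ) = (n : ℝ) - 1 := by rw [Nat.cast_sub hn]; norm_num
    rw [← h1, h2, h3, h4]; ring
  set P := rpoch θ (n - m) with hPdef
  set Q := rpoch (θ + ((n - m : ℕ) : ℝ)) (m + 1) with hQdef
  set R := rpoch (θ + 1) (n - 1) with hRdef
  have hQ : 0 < Q := rpoch_pos (by have : (0:ℝ) ≤ ((n - m : ℕ) : ℝ) := Nat.cast_nonneg _; linarith) _
  have hR : 0 < R := rpoch_pos (by linarith) _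
  have hn0 : (0:ℝ) < n := by exact_mod_cast hn
  have hnθ : (0:ℝ) < (n:ℝ) + θ := by linarith
  rw [div_eq_div_iff (by positivity) (by positivity)]
  field_simp
  linear_combination (-(n.choose m : ℝ)) * hkey

lemma part2 (θ : ℝ) (hθ : 0 < θ) :
    ∀ l : List ℕ, (∀ m ∈ l, 0 < m) → l ≠ [] →
      (∏ i : Fin l.length,
          ((((l.drop i).sum).choose (l.get i) : ℝ) * rpoch θ ((l.drop i).sum - l.get i) *
              ((l.get i).factorial : ℝ) /
            (rpoch (θ + 1) ((l.drop i).sum - 1) * ((l.drop i).sum : ℝ)))) =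
        θ ^ l.length * (l.sum.factorial : ℝ) /
          (rpoch θ l.sum * ∏ i : Fin l.length, ((l.drop i).sum : ℝ)) := by
  intro l
  induction l with
  | nil => intro _ h; exact absurd rfl h
  | cons a t ih =>
    intro hpos _
    have ha : 0 < a := hpos a (List.mem_cons_self)
    rcases eq_or_ne t [] with rfl | ht
    · simp only [List.length_cons, List.length_nil, Fin.prod_univ_one]
      simp
      have h2 : rpoch θ a = θ * rpoch (θ + 1) (a - 1) := by
        conv_lhs => rw [show a = (a - 1) + 1 by omega]
        exact rpoch_succ_left θ (a - 1)
      have hR : 0 < rpoch (θ + 1) (a - 1) := rpoch_pos (by linarith) _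
      have ha0 : (0:ℝ) < a := by exact_mod_cast ha
      rw [h2, show rpoch θ 0 = 1 from Finset.prod_range_zero _]
      field_simp
    · simp only [List.length_cons]
      rw [Fin.prod_univ_succ, Fin.prod_univ_succ]
      simp only [List.get_eq_getElem, Fin.val_succ, List.drop_succ_cons,
        List.getElem_cons_succ, Fin.val_zero, List.drop_zero, List.getElem_cons_zero,
        List.sum_cons]
      rw [show (∏ x : Fin t.length,
          (((List.drop (↑x) t).sum.choose t[(x:ℕ)] : ℝ) * rpoch θ ((List.drop (↑x) t).sum - t[(x:ℕ)]) *
              (t[(x:ℕ)].factorial : ℝ) /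
            (rpoch (θ + 1) ((List.drop (↑x) t).sum - 1) * ((List.drop (↑x) t).sum : ℝ)))) =
          θ ^ t.length * (t.sum.factorial : ℝ) /
          (rpoch θ t.sum * ∏ x : Fin t.length, ((List.drop (↑x) t).sum : ℝ)) from by
        simpa using ih (fun m hm => hpos m (List.mem_cons_of_mem a hm)) ht]
      have hs : 0 < t.sum :=
        List.sum_pos t (fun x hx => hpos x (List.mem_cons_of_mem a hx)) ht
      have hP : (0:ℝ) < ∏ x : Fin t.length, ((List.drop (↑x) t).sum : ℝ) := by
        apply Finset.prod_pos
        intro i _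
        have hd : List.drop (↑i) t ≠ [] := by
          rw [ne_eq, List.drop_eq_nil_iff]
          exact not_le.mpr i.isLt
        have : 0 < (List.drop (↑i) t).sum :=
          List.sum_pos _ (fun x hx =>
            hpos x (List.mem_cons_of_mem a (List.mem_of_mem_drop hx))) hd
        exact_mod_cast this
      have hC : (((a + t.sum).choose a : ℕ) : ℝ) * a.factorial * t.sum.factorial
          = ((a + t.sum).factorial : ℝ) := by
        have h := Nat.choose_mul_factorial_mul_factorial (Nat.le_add_right a t.sum)
        rw [Nat.add_sub_cancel_left] at h
        exact_mod_cast congrArg (Nat.cast : ℕ → ℝ) h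
      have h2 : rpoch θ (a + t.sum) = θ * rpoch (θ + 1) (a + t.sum - 1) := by
        conv_lhs => rw [show a + t.sum = (a + t.sum - 1) + 1 by omega]
        exact rpoch_succ_left θ _
      rw [Nat.add_sub_cancel_left, h2]
      have hR : 0 < rpoch (θ + 1) (a + t.sum - 1) := rpoch_pos (by linarith) _
      have hrs : 0 < rpoch θ t.sum := rpoch_pos hθ _
      have hn0 : (0:ℝ) < ((a + t.sum : ℕ) : ℝ) := by
        have : 0 < a + t.sum := by omega
        exact_mod_cast this
      rw [div_mul_div_comm, div_eq_div_iff (by positivity) (by positivity)]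
      linear_combination (θ ^ t.length * θ * rpoch θ t.sum *
        rpoch (θ + 1) (a + t.sum - 1) * ((a + t.sum : ℕ) : ℝ) *
        (∏ x : Fin t.length, ((List.drop (↑x) t).sum : ℝ))) * hC

end helpers

/-- For `W` distributed beta`(1,θ)` (density `θ(1-x)^(θ-1)` on `(0,1)`), the
stick-breaking decrement matrix is `q(n:m) = C(n,m)(θ)_(n-m) m! / ((θ+1)_(n-1) n)`,
and the product formula `p°(λ) = ∏_j q(Λ_j : λ_j)` (with tail sums
`Λ_j = λ_j + ⋯ + λ_k`) simplifies to `θ^k n! / ((θ)_n ∏_j Λ_j)`. -/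
theorem ewens_decrement_and_product (θ : ℝ) (hθ : 0 < θ) :
    (∀ n m : ℕ, 1 ≤ m → m ≤ n →
      (n.choose m : ℝ) *
          (∫ x in Set.Ioo (0:ℝ) 1, x ^ m * (1 - x) ^ (n - m) * (θ * (1 - x) ^ (θ - 1))) /
        (∫ x in Set.Ioo (0:ℝ) 1, (1 - (1 - x) ^ n) * (θ * (1 - x) ^ (θ - 1))) =
      (n.choose m : ℝ) * rpoch θ (n - m) * (m.factorial : ℝ) /
        (rpoch (θ + 1) (n - 1) * n)) ∧
    (∀ l : List ℕ, (∀ m ∈ l, 0 < m) → l ≠ [] →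
      (∏ i : Fin l.length,
          ((((l.drop i).sum).choose (l.get i) : ℝ) * rpoch θ ((l.drop i).sum - l.get i) *
              ((l.get i).factorial : ℝ) /
            (rpoch (θ + 1) ((l.drop i).sum - 1) * ((l.drop i).sum : ℝ)))) =
        θ ^ l.length * (l.sum.factorial : ℝ) /
          (rpoch θ l.sum * ∏ i : Fin l.length, ((l.drop i).sum : ℝ))) :=
  ⟨fun n m hm hmn => part1 θ hθ n m hm hmn, part2 θ hθ⟩
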